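/- Let N > 1 and let χ be a Dirichlet character mod N with conductor N* and induced primitive character χ*. If N1 is the maximal divisor of N having the same prime divisors as N*, and N* ≠ N1/gcd(n, N1), then the Gauss sum G(n, χ) = Σ_{t=0}^{N−1} χ(t) e_N(tn) equals 0. -/

import Mathlib

open Finset

noncomputable def eN (N : ℕ) (x : ℤ) : ℂ :=
  Complex.exp (2 * Real.pi * Complex.I * (x : ℂ) / (N : ℂ))

lemma eN_add (N : ℕ) (x y : ℤ) : eN N (x + y) = eN N x * eN N y := by
  rw [eN, eN, eN, ← Complex.exp_add]
  congr 1
  push_cast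
  ring

lemma eN_zero (N : ℕ) : eN N 0 = 1 := by simp [eN]

lemma eN_dvd_eq_one (N : ℕ) (hN : N ≠ 0) (x : ℤ) (h : (N : ℤ) ∣ x) : eN N x = 1 := by
  obtain ⟨k, rfl⟩ := h
  rw [eN]
  have hNC : (N : ℂ) ≠ 0 := by exact_mod_cast hN
  have : 2 * Real.pi * Complex.I * ((N : ℤ) * k : ℤ) / (N : ℂ) = k * (2 * Real.pi * Complex.I) := by
    push_cast
    field_simp
  rw [this, Complex.exp_int_mul_two_pi_mul_I]

lemma eN_congr (N : ℕ) (hN : N ≠ 0) (x y : ℤ) (h : (N : ℤ) ∣ (x - y)) : eN N x = eN N y := by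
  have : x = y + (x - y) := by ring
  rw [this, eN_add, eN_dvd_eq_one N hN _ h, mul_one]

lemma eN_pow (N : ℕ) (j : ℕ) (k : ℤ) : eN N (j * k) = (eN N k) ^ j := by
  induction j with
  | zero => simp [eN_zero]
  | succ m ih => push_cast; rw [add_mul, one_mul, eN_add, ih, pow_succ]

lemma eN_mul_left (M P : ℕ) (hM : M ≠ 0) (hP : P ≠ 0) (x : ℤ) :
    eN (M * P) ((M : ℤ) * x) = eN P x := by
  rw [eN, eN]
  congr 1
  have hMC : (M : ℂ) ≠ 0 := by exact_mod_cast hM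
  have hPC : (P : ℂ) ≠ 0 := by exact_mod_cast hP
  push_cast
  field_simp

lemma eN_sum_eq_zero (m : ℕ) (hm : m ≠ 0) (k : ℤ) (h : ¬ ((m : ℤ) ∣ k)) :
    ∑ j ∈ range m, eN m (j * k) = 0 := by
  have hne : eN m k ≠ 1 := by
    intro hc
    apply h
    rw [eN, Complex.exp_eq_one_iff] at hc
    obtain ⟨z, hz⟩ := hc
    have hNC : (m : ℂ) ≠ 0 := by exact_mod_cast hm
    have h2 : (2 : ℂ) * Real.pi * Complex.I ≠ 0 := by
      simp [Real.pi_ne_zero, Complex.I_ne_zero]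
    have hz' : (2 : ℂ) * Real.pi * Complex.I * k = 2 * Real.pi * Complex.I * (z * m) := by
      field_simp at hz
      linear_combination (2 * Real.pi * Complex.I) * hz
    have hk : (k : ℂ) = ((z * m : ℤ) : ℂ) := by
      push_cast
      exact mul_left_cancel₀ h2 hz'
    have : k = z * m := by exact_mod_cast hk
    exact ⟨z, by rw [this]; ring⟩
  have hpow : ∀ j : ℕ, eN m (j * k) = (eN m k) ^ j := fun j => eN_pow m j k
  calc ∑ j ∈ range m, eN m (j * k) = ∑ j ∈ range m, (eN m k) ^ j := by
        exact Finset.sum_congr rfl fun j _ => hpow j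
    _ = ((eN m k) ^ m - 1) / (eN m k - 1) := geom_sum_eq hne m
    _ = 0 := by
        rw [← eN_pow, eN_dvd_eq_one m hm _ ⟨k, by push_cast; ring⟩]
        simp
open Finset DirichletCharacter

lemma factorsThrough_gcd {N : ℕ} [NeZero N] (χ : DirichletCharacter ℂ N) {d₁ d₂ : ℕ}
    (h₁ : χ.FactorsThrough d₁) (h₂ : χ.FactorsThrough d₂) :
    χ.FactorsThrough (Nat.gcd d₁ d₂) := by
  have hd₁ : d₁ ∣ N := h₁.dvd
  have hd₂ : d₂ ∣ N := h₂.dvd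
  have hg : Nat.gcd d₁ d₂ ∣ N := (Nat.gcd_dvd_left d₁ d₂).trans hd₁
  rw [factorsThrough_iff_ker_unitsMap hg]
  rw [factorsThrough_iff_ker_unitsMap hd₁] at h₁
  rw [factorsThrough_iff_ker_unitsMap hd₂] at h₂
  intro u hu
  set U := (u : ZMod N).val with hU
  have hUg : ((U : ℕ) : ZMod (Nat.gcd d₁ d₂)) = ((1 : ℕ) : ZMod (Nat.gcd d₁ d₂)) := by
    rw [MonoidHom.mem_ker, ZMod.unitsMap_def] at hu
    have h' : ZMod.castHom hg (ZMod (Nat.gcd d₁ d₂)) (u : ZMod N) = 1 := by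
      have := congrArg Units.val hu
      simpa using this
    rw [ZMod.natCast_val, Nat.cast_one]
    simpa using h'
  have hmodeq : (1 : ℕ) ≡ U [MOD Nat.gcd d₁ d₂] :=
    (ZMod.natCast_eq_natCast_iff _ _ _).mp hUg.symm
  obtain ⟨k, hk1, hk2⟩ := Nat.chineseRemainder' hmodeq
  set L := Nat.lcm d₁ d₂ with hL
  have hLN : L ∣ N := Nat.lcm_dvd hd₁ hd₂
  have hNne : N ≠ 0 := NeZero.ne N
  have hLne : L ≠ 0 := fun h => hNne (Nat.eq_zero_of_zero_dvd (h ▸ hLN))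
  haveI : NeZero L := ⟨hLne⟩
  have hcopUN : Nat.Coprime U N := ZMod.val_coe_unit_coprime u
  have hcop : Nat.Coprime k L := by
    by_contra hc
    obtain ⟨q, hqprime, hqdvd⟩ := Nat.exists_prime_and_dvd (fun h1 => hc h1)
    have hqk : q ∣ k := hqdvd.trans (Nat.gcd_dvd_left _ _)
    have hqL : q ∣ L := hqdvd.trans (Nat.gcd_dvd_right _ _)
    have hq2 : 2 ≤ q := hqprime.two_le
    have hqor : q ∣ d₁ ∨ q ∣ d₂ := (Nat.Prime.dvd_mul hqprime).mp (hqL.trans (Nat.lcm_dvd_mul d₁ d₂))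
    rcases hqor with hq1 | hq2'
    · have hm : k % q = 1 % q := hk1.of_dvd hq1
      have h0 : k % q = 0 := Nat.mod_eq_zero_of_dvd hqk
      rw [h0, Nat.mod_eq_of_lt (show 1 < q by omega)] at hm
      omega
    · have hm : k % q = U % q := hk2.of_dvd hq2'
      have h0 : k % q = 0 := Nat.mod_eq_zero_of_dvd hqk
      have hqU : q ∣ U := Nat.dvd_of_mod_eq_zero (by omega)
      have hqN : q ∣ N := hq2'.trans hd₂
      have : q ∣ 1 := Nat.dvd_gcd hqU hqN |>.trans (by rw [hcopUN])
      have := Nat.le_of_dvd one_pos this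
      omega
  have hkunit : IsUnit ((k : ℕ) : ZMod L) := (ZMod.isUnit_iff_coprime k L).mpr hcop
  obtain ⟨w, hw⟩ := ZMod.unitsMap_surjective hLN hkunit.unit
  have hwcast : ZMod.castHom hLN (ZMod L) (w : ZMod N) = ((k : ℕ) : ZMod L) := by
    have := congrArg Units.val hw
    simpa [ZMod.unitsMap_def] using this
  -- cast of w to ZMod d₁ is 1
  have hcast1 : ∀ (d : ℕ) (hd : d ∣ N) (hdL : d ∣ L),
      ZMod.castHom hd (ZMod d) (w : ZMod N) = ((k : ℕ) : ZMod d) := by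
    intro d hd hdL
    have : ZMod.castHom hd (ZMod d) (w : ZMod N)
        = ZMod.castHom hdL (ZMod d) (ZMod.castHom hLN (ZMod L) (w : ZMod N)) := by
      rw [← ZMod.castHom_comp hdL hLN]; rfl
    rw [this, hwcast]
    simp
  have hw1 : w ∈ (ZMod.unitsMap hd₁).ker := by
    rw [MonoidHom.mem_ker, ZMod.unitsMap_def]
    ext
    show ZMod.castHom hd₁ (ZMod d₁) (w : ZMod N) = 1
    rw [hcast1 d₁ hd₁ (Nat.dvd_lcm_left d₁ d₂)]
    have : ((k : ℕ) : ZMod d₁) = ((1 : ℕ) : ZMod d₁) := (ZMod.natCast_eq_natCast_iff _ _ _).mpr hk1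
    simpa using this
  have hw2 : w * u⁻¹ ∈ (ZMod.unitsMap hd₂).ker := by
    rw [MonoidHom.mem_ker, map_mul, map_inv]
    have heq : ZMod.unitsMap hd₂ w = ZMod.unitsMap hd₂ u := by
      ext
      show ZMod.castHom hd₂ (ZMod d₂) (w : ZMod N) = ZMod.castHom hd₂ (ZMod d₂) (u : ZMod N)
      rw [hcast1 d₂ hd₂ (Nat.dvd_lcm_right d₁ d₂)]
      have : ((k : ℕ) : ZMod d₂) = ((U : ℕ) : ZMod d₂) := (ZMod.natCast_eq_natCast_iff _ _ _).mpr hk2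
      rw [this, hU, ZMod.natCast_val]
      simp
    rw [heq, mul_inv_cancel]
  have hχw : χ.toUnitHom w = 1 := h₁ hw1
  have hχwu : χ.toUnitHom (w * u⁻¹) = 1 := h₂ hw2
  rw [MonoidHom.mem_ker]
  have hueq : u = w * (w * u⁻¹)⁻¹ := by rw [mul_inv_rev, inv_inv, mul_comm u w⁻¹, mul_inv_cancel_left]
  rw [hueq, map_mul, map_inv, hχw, hχwu]
  simp

lemma conductor_dvd_of_factorsThrough {N : ℕ} [NeZero N] (χ : DirichletCharacter ℂ N) {d : ℕ}
    (h : χ.FactorsThrough d) : χ.conductor ∣ d := by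
  have hgcd : χ.FactorsThrough (Nat.gcd d χ.conductor) :=
    factorsThrough_gcd χ h (DirichletCharacter.factorsThrough_conductor χ)
  have h1 : χ.conductor ≤ Nat.gcd d χ.conductor := Nat.sInf_le hgcd
  have h2 : Nat.gcd d χ.conductor ∣ χ.conductor := Nat.gcd_dvd_right _ _
  have hcne : χ.conductor ≠ 0 := DirichletCharacter.conductor_ne_zero χ
  have h3 : Nat.gcd d χ.conductor = χ.conductor := by
    have hle : Nat.gcd d χ.conductor ≤ χ.conductor :=
      Nat.le_of_dvd (Nat.pos_of_ne_zero hcne) h2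
    omega
  rw [← h3]
  exact Nat.gcd_dvd_left d _

lemma exists_bad_unit {N : ℕ} [NeZero N] (χ : DirichletCharacter ℂ N) {M : ℕ} (hM : M ∣ N)
    (hns : ¬ χ.conductor ∣ M) :
    ∃ u : (ZMod N)ˣ, ZMod.unitsMap hM u = 1 ∧ χ.toUnitHom u ≠ 1 := by
  by_contra hc
  push_neg at hc
  apply hns
  apply conductor_dvd_of_factorsThrough χ
  rw [DirichletCharacter.factorsThrough_iff_ker_unitsMap hM]
  intro u hu
  rw [MonoidHom.mem_ker] at hu ⊢
  exact hc u hu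

theorem gauss_sum_vanishes (N : ℕ) (hN : 1 < N) (χ : DirichletCharacter ℂ N)
    (n : ℤ) (N1 : ℕ) (hN1dvd : N1 ∣ N)
    (hsame : ∀ p : ℕ, p.Prime → (p ∣ N1 ↔ p ∣ χ.conductor))
    (hmax : ∀ d : ℕ, d ∣ N → (∀ p : ℕ, p.Prime → (p ∣ d ↔ p ∣ χ.conductor)) → d ∣ N1)
    (hcond : χ.conductor ≠ N1 / Int.gcd n N1) :
    ∑ t ∈ Finset.range N, χ (t : ZMod N) * eN N (t * n) = 0 := by
  have hN0 : N ≠ 0 := by omega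
  haveI : NeZero N := ⟨hN0⟩
  set Q := χ.conductor with hQ
  have hQdvdN : Q ∣ N := DirichletCharacter.conductor_dvd_level χ
  have hQne : Q ≠ 0 := DirichletCharacter.conductor_ne_zero χ
  have hN1ne : N1 ≠ 0 := fun h => hN0 (Nat.eq_zero_of_zero_dvd (h ▸ hN1dvd))
  set d1 := Int.gcd n N1 with hd1
  have hd1N1 : d1 ∣ N1 := by
    have := Int.gcd_dvd_right (a := n) (b := (N1 : ℤ))
    exact_mod_cast this
  have hd1n : (d1 : ℤ) ∣ n := Int.gcd_dvd_left n N1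
  have hd1ne : d1 ≠ 0 := fun h => hN1ne (by simpa [h] using Nat.eq_zero_of_zero_dvd (h ▸ hd1N1))
  set m1 := N1 / d1 with hm1
  have hm1eq : d1 * m1 = N1 := Nat.mul_div_cancel' hd1N1
  have hm1ne : m1 ≠ 0 := by
    intro h
    rw [h, mul_zero] at hm1eq
    exact hN1ne hm1eq.symm
  have hm1N1 : m1 ∣ N1 := Dvd.intro_left d1 hm1eq
  have hQdvdN1 : Q ∣ N1 := hmax Q hQdvdN (fun p hp => Iff.rfl)
  -- find the distinguishing prime
  obtain ⟨p, hfac⟩ : ∃ p, Q.factorization p ≠ m1.factorization p := by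
    by_contra hcon
    push_neg at hcon
    exact hcond (Nat.factorization_inj (Set.mem_setOf.mpr hQne) (Set.mem_setOf.mpr hm1ne)
      (Finsupp.ext hcon))
  have hp : p.Prime := by
    by_contra hnp
    rw [Nat.factorization_eq_zero_of_not_prime _ hnp,
      Nat.factorization_eq_zero_of_not_prime _ hnp] at hfac
    exact hfac rfl
  set a := N.factorization p with ha
  set b := d1.factorization p with hb
  set s := m1.factorization p with hs
  set c := Q.factorization p with hc
  have hpQ : p ∣ Q := by
    rcases Nat.lt_or_ge 0 c with h1 | h1
    · exact (Nat.Prime.dvd_iff_one_le_factorization hp hQne).mpr h1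
    · have hs1 : 1 ≤ s := by omega
      have hpm1 : p ∣ m1 := (Nat.Prime.dvd_iff_one_le_factorization hp hm1ne).mpr hs1
      exact (hsame p hp).mp (hpm1.trans hm1N1)
  have hpaN1 : p ^ a ∣ N1 := by
    have hD_dvd : Nat.lcm N1 (p ^ a) ∣ N := Nat.lcm_dvd hN1dvd (Nat.ordProj_dvd N p)
    have hD_primes : ∀ q : ℕ, q.Prime → (q ∣ Nat.lcm N1 (p ^ a) ↔ q ∣ Q) := by
      intro q hq
      constructor
      · intro hqD
        have : q ∣ N1 * p ^ a := hqD.trans (Nat.lcm_dvd_mul _ _)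
        rcases (Nat.Prime.dvd_mul hq).mp this with h' | h'
        · exact (hsame q hq).mp h'
        · have : q = p := (Nat.prime_dvd_prime_iff_eq hq hp).mp (hq.dvd_of_dvd_pow h')
          exact this ▸ hpQ
      · intro hqQ
        exact ((hsame q hq).mpr hqQ).trans (Nat.dvd_lcm_left _ _)
    exact (Nat.dvd_lcm_right N1 (p ^ a)).trans (hmax _ hD_dvd hD_primes)
  have haN1 : N1.factorization p = a := by
    refine le_antisymm ?_ ?_
    · have := (Nat.factorization_le_iff_dvd hN1ne hN0).mpr hN1dvd p
      simpa using this
    · exact (Nat.Prime.pow_dvd_iff_le_factorization hp hN1ne).mp hpaN1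
  have habs : a = b + s := by
    rw [← haN1, ← hm1eq, Nat.factorization_mul hd1ne hm1ne]
    simp [hb, hs]
  -- the Gauss sum over ZMod N
  set F : ZMod N → ℂ := fun t => χ t * eN N ((t.val : ℤ) * n) with hF
  have hreindex : ∑ t ∈ Finset.range N, χ (t : ZMod N) * eN N (t * n) = ∑ t : ZMod N, F t := by
    rw [hF]
    refine Finset.sum_nbij' (fun i => (i : ZMod N)) (fun t => t.val) ?_ ?_ ?_ ?_ ?_
    · intro i _; exact Finset.mem_univ _
    · intro t _; exact Finset.mem_range.mpr (ZMod.val_lt t)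
    · intro i hi; simp [ZMod.val_natCast_of_lt (Finset.mem_range.mp hi)]
    · intro t _; simp [ZMod.natCast_val, ZMod.cast_id]
    · intro i hi
      rw [ZMod.val_natCast_of_lt (Finset.mem_range.mp hi)]
  rw [hreindex]
  set G := ∑ t : ZMod N, F t with hG
  -- substitution by a unit w : G = χ(w) * G * correction
  rcases Nat.lt_or_ge s c with hcase | hcase
  · -- case (i) : c > s, multiplicative shift
    set M := N / p ^ b with hM
    have hpbd1 : p ^ b ∣ d1 := Nat.ordProj_dvd d1 p
    have hpbN : p ^ b ∣ N := hpbd1.trans (hd1N1.trans hN1dvd)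
    have hMN : M ∣ N := Nat.div_dvd_of_dvd hpbN
    have hNMP : M * p ^ b = N := Nat.div_mul_cancel hpbN
    have hMne : M ≠ 0 := by intro h; rw [h, zero_mul] at hNMP; exact hN0 hNMP.symm
    have hQM : ¬ Q ∣ M := by
      intro hdvd
      have hle := (Nat.factorization_le_iff_dvd hQne hMne).mpr hdvd p
      have hMfac : M.factorization p = a - b := by
        rw [hM, Nat.factorization_div hpbN]
        simp [Nat.Prime.factorization_pow hp]
        rfl
      rw [hMfac] at hle
      omega
    obtain ⟨w, hw1, hw2⟩ := exists_bad_unit χ hMN hQM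
    set W := ((w : ZMod N)).val with hW
    have hMW : (M : ℤ) ∣ (W : ℤ) - 1 := by
      have h' : ZMod.castHom hMN (ZMod M) (w : ZMod N) = 1 := by
        have := congrArg Units.val hw1
        simpa [ZMod.unitsMap_def] using this
      have h2 : ((W : ℕ) : ZMod M) = 1 := by
        rw [hW, ZMod.natCast_val]
        simpa using h'
      have h3 : (((W : ℤ) - 1 : ℤ) : ZMod M) = 0 := by
        push_cast
        rw [show ((W : ℕ) : ZMod M) = 1 from h2]
        ring
      exact (ZMod.intCast_zmod_eq_zero_iff_dvd _ _).mp h3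
    have hpbn : ((p ^ b : ℕ) : ℤ) ∣ n := (Int.natCast_dvd_natCast.mpr hpbd1).trans hd1n
    have hNdvd : (N : ℤ) ∣ ((W : ℤ) - 1) * n := by
      have hcast : (N : ℤ) = (M : ℤ) * ((p ^ b : ℕ) : ℤ) := by exact_mod_cast hNMP.symm
      rw [hcast]
      exact mul_dvd_mul hMW hpbn
    have hsub : G = χ (w : ZMod N) * G := by
      calc G = ∑ t : ZMod N, F ((w : ZMod N) * t) :=
            (Fintype.sum_bijective (fun t => (w : ZMod N) * t) (Units.mulLeft_bijective w)
              (fun t => F ((w : ZMod N) * t)) F (fun t => rfl)).symm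
        _ = ∑ t : ZMod N, χ (w : ZMod N) * F t := by
            refine Finset.sum_congr rfl fun t _ => ?_
            rw [hF]
            simp only [map_mul]
            rw [mul_assoc]
            congr 1
            congr 1
            apply eN_congr N hN0
            have h1 : (N : ℤ) ∣ ((((w : ZMod N) * t).val : ℤ) - (W : ℤ) * (t.val : ℤ)) := by
              have hval : ((w : ZMod N) * t).val = (W * t.val) % N := ZMod.val_mul _ _
              rw [hval]
              have := (Nat.mod_modEq (W * t.val) N).dvd
              push_cast at this ⊢
              exact dvd_sub_comm.mp this
            have heq : ((((w : ZMod N) * t).val : ℤ)) * n - ((t.val : ℤ)) * n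
                = ((((w : ZMod N) * t).val : ℤ) - (W : ℤ) * (t.val : ℤ)) * n
                  + (((W : ℤ) - 1) * n) * (t.val : ℤ) := by ring
            rw [heq]
            exact dvd_add (h1.mul_right n) (hNdvd.mul_right _)
        _ = χ (w : ZMod N) * G := by rw [hG, ← Finset.mul_sum]
    have hne1 : χ ((w : (ZMod N)ˣ) : ZMod N) ≠ 1 := by
      intro hone
      apply hw2
      ext
      rw [MulChar.coe_toUnitHom]
      simpa using hone
    have hzero : (χ ((w : (ZMod N)ˣ) : ZMod N) - 1) * G = 0 := by
      rw [sub_mul, one_mul, ← hsub, sub_self]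
    rcases mul_eq_zero.mp hzero with h' | h'
    · exact absurd (sub_eq_zero.mp h') hne1
    · exact h'
  · -- case (ii) : s > c (since ≠), averaging
    have hcs : c < s := by
      rcases Nat.lt_or_ge c s with h' | h'
      · exact h'
      · exfalso; exact hfac (by omega)
    have hc1 : 1 ≤ c := (hp.dvd_iff_one_le_factorization hQne).mp hpQ
    set P := p ^ (b + 1) with hP
    have hPne : P ≠ 0 := pow_ne_zero _ hp.ne_zero
    have hPN : P ∣ N := by
      rw [hP]
      exact (hp.pow_dvd_iff_le_factorization hN0).mpr (by omega)
    set M := N / P with hM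
    have hNMP : M * P = N := Nat.div_mul_cancel hPN
    have hMne : M ≠ 0 := by intro h; rw [h, zero_mul] at hNMP; exact hN0 hNMP.symm
    have hQdvdN_fac : ∀ q : ℕ, Q.factorization q ≤ N.factorization q :=
      fun q => (Nat.factorization_le_iff_dvd hQne hN0).mpr hQdvdN q
    have hQM : Q ∣ M := by
      rw [hM, Nat.dvd_div_iff_mul_dvd hPN]
      apply (Nat.factorization_le_iff_dvd (mul_ne_zero hPne hQne) hN0).mp
      intro q
      rw [Nat.factorization_mul hPne hQne]
      rcases eq_or_ne q p with rfl | hqp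
      · have h1 : P.factorization q = b + 1 := by
          rw [hP, Nat.Prime.factorization_pow hp]
          simp
        simp only [Finsupp.coe_add, Pi.add_apply, h1]
        omega
      · have h1 : P.factorization q = 0 := by
          rw [hP, Nat.Prime.factorization_pow hp]
          simp [Finsupp.single_apply, (Ne.symm hqp)]
        simp only [Finsupp.coe_add, Pi.add_apply, h1, zero_add]
        exact hQdvdN_fac q
    have hpM : p ∣ M := by
      rw [hM, Nat.dvd_div_iff_mul_dvd hPN]
      have h2 : p ^ (b + 2) ∣ N := (hp.pow_dvd_iff_le_factorization hN0).mpr (by omega)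
      have : P * p = p ^ (b + 2) := by rw [hP]; ring
      rw [this]
      exact h2
    have hallM : ∀ q : ℕ, q.Prime → q ∣ N → q ∣ M := by
      intro q hq hqN
      rcases eq_or_ne q p with rfl | hqp
      · exact hpM
      · apply (hq.dvd_iff_one_le_factorization hMne).mpr
        have hMfac : M.factorization q = N.factorization q := by
          rw [hM, Nat.factorization_div hPN, hP, Nat.Prime.factorization_pow hp]
          simp [Finsupp.single_apply, Ne.symm hqp]
        rw [hMfac]
        exact (hq.dvd_iff_one_le_factorization hN0).mp hqN
    have hPn : ¬ ((P : ℤ) ∣ n) := by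
      intro hdvd
      have hPN1 : P ∣ N1 := (hp.pow_dvd_iff_le_factorization hN1ne).mpr (by omega)
      have h2 : (P : ℤ) ∣ (d1 : ℤ) := Int.dvd_coe_gcd hdvd (Int.natCast_dvd_natCast.mpr hPN1)
      have h3 : P ∣ d1 := Int.natCast_dvd_natCast.mp h2
      have := (hp.pow_dvd_iff_le_factorization hd1ne).mp h3
      omega
    have hpN : p ∣ N := (dvd_pow_self p (Nat.succ_ne_zero b)).trans hPN
    -- the key averaging identity
    have hkey : ∀ j ∈ Finset.range P, G = ∑ t : ZMod N, F t * eN P ((j : ℤ) * ((t.val : ℤ) * n)) := by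
      intro j _
      have hcop : Nat.Coprime (1 + j * M) N := by
        by_contra hc
        obtain ⟨q, hq, hqd⟩ := Nat.exists_prime_and_dvd (fun h1 => hc h1)
        have hq1 : q ∣ 1 + j * M := hqd.trans (Nat.gcd_dvd_left _ _)
        have hqN : q ∣ N := hqd.trans (Nat.gcd_dvd_right _ _)
        have hqM : q ∣ j * M := Dvd.dvd.mul_left (hallM q hq hqN) j
        have : q ∣ 1 := (Nat.dvd_add_right hqM).mp (by rwa [add_comm] at hq1)
        have := Nat.le_of_dvd one_pos this
        have := hq.two_le
        omega
      have hunit : IsUnit ((1 + j * M : ℕ) : ZMod N) := (ZMod.isUnit_iff_coprime _ N).mpr hcop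
      have huval : (hunit.unit : ZMod N) = ((1 + j * M : ℕ) : ZMod N) := hunit.unit_spec
      have hχu : χ ((hunit.unit : ZMod N)) = 1 := by
        obtain ⟨hdvd', χ₀, hχ⟩ := DirichletCharacter.factorsThrough_conductor χ
        have hQjM : Q ∣ j * M := Dvd.dvd.mul_left hQM j
        have hcastQ : ((1 + j * M : ℕ) : ZMod χ.conductor) = 1 := by
          have hmod : (1 + j * M : ℕ) ≡ 1 + 0 [MOD χ.conductor] :=
            (Nat.ModEq.refl 1).add ((Nat.modEq_zero_iff_dvd).mpr hQjM)
          have := (ZMod.natCast_eq_natCast_iff _ _ _).mpr hmod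
          simpa using this
        rw [hχ, huval]
        have := DirichletCharacter.changeLevel_eq_cast_of_dvd χ₀ hdvd' hunit.unit
        rw [huval] at this
        rw [this, ZMod.cast_natCast hdvd', hcastQ, map_one]
      calc G = ∑ t : ZMod N, F ((hunit.unit : ZMod N) * t) :=
            (Fintype.sum_bijective (fun t => (hunit.unit : ZMod N) * t)
              (Units.mulLeft_bijective hunit.unit)
              (fun t => F ((hunit.unit : ZMod N) * t)) F (fun t => rfl)).symm
        _ = ∑ t : ZMod N, F t * eN P ((j : ℤ) * ((t.val : ℤ) * n)) := by
            refine Finset.sum_congr rfl fun t _ => ?_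
            rw [hF]
            simp only [map_mul, hχu, one_mul]
            rw [mul_assoc]
            congr 1
            -- eN N ((u*t).val * n) = eN N (t.val * n) * eN P (j * (t.val * n))
            have hval : ((hunit.unit : ZMod N) * t).val = ((1 + j * M) * t.val) % N := by
              rw [huval]
              rw [ZMod.val_mul, ZMod.val_natCast]
              rw [Nat.mod_mul_mod]
            have hcongr : eN N ((((hunit.unit : ZMod N) * t).val : ℤ) * n)
                = eN N ((((1 + j * M) * t.val : ℕ) : ℤ) * n) := by
              apply eN_congr N hN0
              have hmm := (Nat.mod_modEq ((1 + j * M) * t.val) N).dvd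
              have : (N : ℤ) ∣ ((((hunit.unit : ZMod N) * t).val : ℤ)
                  - (((1 + j * M) * t.val : ℕ) : ℤ)) := by
                rw [hval]
                push_cast at hmm ⊢
                exact dvd_sub_comm.mp hmm
              have heq : (((hunit.unit : ZMod N) * t).val : ℤ) * n
                  - (((1 + j * M) * t.val : ℕ) : ℤ) * n
                  = ((((hunit.unit : ZMod N) * t).val : ℤ)
                    - (((1 + j * M) * t.val : ℕ) : ℤ)) * n := by ring
              rw [heq]
              exact this.mul_right n
            rw [hcongr]
            have hsplit : (((1 + j * M) * t.val : ℕ) : ℤ) * n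
                = (t.val : ℤ) * n + (M : ℤ) * ((j : ℤ) * ((t.val : ℤ) * n)) := by
              push_cast
              ring
            rw [hsplit, eN_add]
            congr 1
            have h5 := eN_mul_left M P hMne hPne ((j : ℤ) * ((t.val : ℤ) * n))
            rw [hNMP] at h5
            exact h5
    -- sum over j
    have hPC : ((P : ℕ) : ℂ) ≠ 0 := by exact_mod_cast hPne
    have hfinal : (P : ℂ) * G = 0 := by
      calc (P : ℂ) * G = ∑ _j ∈ Finset.range P, G := by
            rw [Finset.sum_const, Finset.card_range, nsmul_eq_mul]
        _ = ∑ j ∈ Finset.range P, ∑ t : ZMod N, F t * eN P ((j : ℤ) * ((t.val : ℤ) * n)) :=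
            Finset.sum_congr rfl hkey
        _ = ∑ t : ZMod N, ∑ j ∈ Finset.range P, F t * eN P ((j : ℤ) * ((t.val : ℤ) * n)) :=
            Finset.sum_comm
        _ = 0 := by
            apply Finset.sum_eq_zero
            intro t _
            rw [← Finset.mul_sum]
            by_cases hχt : χ t = 0
            · rw [hF]; simp [hχt]
            · have hunit : IsUnit t := by
                by_contra h
                exact hχt (χ.map_nonunit h)
              have hval_cop : Nat.Coprime t.val N := by
                have := ZMod.val_coe_unit_coprime hunit.unit
                rwa [hunit.unit_spec] at this
              have hpt : ¬ p ∣ t.val := by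
                intro hd
                have : p ∣ Nat.gcd t.val N := Nat.dvd_gcd hd hpN
                rw [hval_cop] at this
                have := Nat.le_of_dvd one_pos this
                have := hp.two_le
                omega
              have hnd : ¬ ((P : ℤ) ∣ (t.val : ℤ) * n) := by
                intro hdd
                have hcopP : Nat.Coprime P t.val :=
                  Nat.Coprime.pow_left _ ((Nat.Prime.coprime_iff_not_dvd hp).mpr hpt)
                have hcop2 : IsCoprime ((P : ℕ) : ℤ) ((t.val : ℕ) : ℤ) :=
                  Nat.Coprime.isCoprime hcopP
                have : (P : ℤ) ∣ n := hcop2.dvd_of_dvd_mul_left hdd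
                exact hPn this
              rw [eN_sum_eq_zero P hPne _ hnd, mul_zero]
    have := mul_eq_zero.mp hfinal
    rcases this with h' | h'
    · exact absurd h' hPC
    · exact h'
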